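/- If H is a graph with o(H) = 𝒩 and γ_MB(H) = γ(H), and G is a graph with n(G) ≥ 2, then γ_MB(G⊙H) = 1 + (n(G)−1)·γ_MB(H) and γ_MB'(G⊙H) = n(G)·γ_MB(H). In particular, if moreover γ_MB(H) = 2, then γ_MB(G⊙H) = 2n(G) − 1 and γ_MB'(G⊙H) = 2n(G). -/

import Mathlib

/-!
Formalization of the Maker-Breaker domination game (MBD game).

In the MBD game on a graph `G`, Dominator and Staller alternately select
previously unplayed vertices.  Dominator wins when the set of vertices he has
selected is a dominating set of `G`; Staller wins when she has selected a
vertex of every dominating set of `G`, which happens exactly when the closed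
neighbourhood of some vertex is entirely contained in her set of selected
vertices.
-/

/-- `D` is a dominating set of `G` (as a finset of vertices). -/
def IsDomSet {V : Type*} (G : SimpleGraph V) (D : Finset V) : Prop :=
  ∀ v, v ∈ D ∨ ∃ u ∈ D, G.Adj u v

/-- Staller (whose selected vertices form `S`) has won: she owns the whole
closed neighbourhood of some vertex, hence a vertex of every dominating set. -/
def StallerWon {V : Type*} (G : SimpleGraph V) (S : Finset V) : Prop :=
  ∃ v, v ∈ S ∧ ∀ u, G.Adj v u → u ∈ S

section Game

variable {V : Type*} [DecidableEq V]

mutual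
  /-- Position with Dominator's vertices `D`, Staller's vertices `S` and
  Dominator to move: Dominator can guarantee to complete a dominating set
  using at most `k` further moves of his own. -/
  inductive DomWinD (G : SimpleGraph V) : Finset V → Finset V → ℕ → Prop where
    | done (D S : Finset V) (k : ℕ) : IsDomSet G D → DomWinD G D S k
    | step (D S : Finset V) (k : ℕ) (v : V) : v ∉ D → v ∉ S →
        DomWinS G (insert v D) S k → DomWinD G D S (k + 1)

  /-- Position with Dominator's vertices `D`, Staller's vertices `S` and
  Staller to move: Dominator can guarantee to complete a dominating set
  using at most `k` further moves of his own. -/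
  inductive DomWinS (G : SimpleGraph V) : Finset V → Finset V → ℕ → Prop where
    | done (D S : Finset V) (k : ℕ) : IsDomSet G D → DomWinS G D S k
    | step (D S : Finset V) (k : ℕ) : (∃ w, w ∉ D ∧ w ∉ S) →
        (∀ w, w ∉ D → w ∉ S → DomWinD G D (insert w S) k) → DomWinS G D S k
end

mutual
  /-- Position with Dominator's vertices `D`, Staller's vertices `S` and
  Staller to move: Staller can guarantee to claim a whole closed neighbourhood
  using at most `k` further moves of her own. -/
  inductive StalWinS (G : SimpleGraph V) : Finset V → Finset V → ℕ → Prop where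
    | done (D S : Finset V) (k : ℕ) : StallerWon G S → StalWinS G D S k
    | step (D S : Finset V) (k : ℕ) (w : V) : w ∉ D → w ∉ S →
        StalWinD G D (insert w S) k → StalWinS G D S (k + 1)

  /-- Position with Dominator's vertices `D`, Staller's vertices `S` and
  Dominator to move: Staller can guarantee to claim a whole closed
  neighbourhood using at most `k` further moves of her own. -/
  inductive StalWinD (G : SimpleGraph V) : Finset V → Finset V → ℕ → Prop where
    | done (D S : Finset V) (k : ℕ) : StallerWon G S → StalWinD G D S k
    | step (D S : Finset V) (k : ℕ) : (∃ v, v ∉ D ∧ v ∉ S) →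
        (∀ v, v ∉ D → v ∉ S → StalWinS G (insert v D) S k) → StalWinD G D S k
end

/-- `γ_MB(G)`: minimum number of Dominator's moves with which he can guarantee
to win the D-game (Dominator moves first); `⊤` if he cannot win it. -/
noncomputable def gammaMB (G : SimpleGraph V) : ℕ∞ :=
  sInf {k : ℕ∞ | ∃ n : ℕ, k = n ∧ DomWinD G ∅ ∅ n}

/-- `γ_MB'(G)`: minimum number of Dominator's moves with which he can guarantee
to win the S-game (Staller moves first); `⊤` if he cannot win it. -/
noncomputable def gammaMB' (G : SimpleGraph V) : ℕ∞ :=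
  sInf {k : ℕ∞ | ∃ n : ℕ, k = n ∧ DomWinS G ∅ ∅ n}

/-- `γ_SMB(G)`: minimum number of Staller's moves with which she can guarantee
to win the D-game (Dominator moves first); `⊤` if she cannot win it. -/
noncomputable def gammaSMB (G : SimpleGraph V) : ℕ∞ :=
  sInf {k : ℕ∞ | ∃ n : ℕ, k = n ∧ StalWinD G ∅ ∅ n}

/-- `γ_SMB'(G)`: minimum number of Staller's moves with which she can guarantee
to win the S-game (Staller moves first); `⊤` if she cannot win it. -/
noncomputable def gammaSMB' (G : SimpleGraph V) : ℕ∞ :=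
  sInf {k : ℕ∞ | ∃ n : ℕ, k = n ∧ StalWinS G ∅ ∅ n}

/-- Outcome `𝒟`: Dominator has a winning strategy no matter who starts. -/
def OutcomeD (G : SimpleGraph V) : Prop :=
  (∃ n, DomWinD G ∅ ∅ n) ∧ (∃ n, DomWinS G ∅ ∅ n)

/-- Outcome `𝒮`: Staller has a winning strategy no matter who starts. -/
def OutcomeS (G : SimpleGraph V) : Prop :=
  (∃ n, StalWinD G ∅ ∅ n) ∧ (∃ n, StalWinS G ∅ ∅ n)

/-- Outcome `𝒩`: the first player has a winning strategy. -/
def OutcomeN (G : SimpleGraph V) : Prop :=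
  (∃ n, DomWinD G ∅ ∅ n) ∧ (∃ n, StalWinS G ∅ ∅ n)

end Game

/-- The corona product `G ⊙ H`: one copy of `G`, a copy of `H` for every
vertex of `G`, and the `i`-th vertex of `G` joined to every vertex of the
`i`-th copy of `H`. -/
def coronaProd {α β : Type*} (G : SimpleGraph α) (H : SimpleGraph β) :
    SimpleGraph (α ⊕ α × β) where
  Adj x y :=
    match x, y with
    | Sum.inl a, Sum.inl a' => G.Adj a a'
    | Sum.inl a, Sum.inr p => a = p.1
    | Sum.inr p, Sum.inl a => a = p.1
    | Sum.inr p, Sum.inr q => p.1 = q.1 ∧ H.Adj p.2 q.2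
  symm := by
    constructor
    rintro (a | p) (a' | q) h
    · exact G.adj_symm h
    · exact h
    · exact h
    · exact ⟨h.1.symm, H.adj_symm h.2⟩
  loopless := by
    constructor
    rintro (a | p) h
    · exact G.irrefl h
    · exact H.irrefl h.2

/-- The domination number `γ(G)` of a finite graph. -/
noncomputable def domNumber {V : Type*} [Fintype V] (G : SimpleGraph V) : ℕ :=
  sInf {n : ℕ | ∃ D : Finset V, D.card = n ∧ IsDomSet G D}

/-- `v` is a dominating vertex: it is adjacent to all other vertices. -/
def IsDomVertex {V : Type*} (G : SimpleGraph V) (v : V) : Prop :=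
  ∀ u, u ≠ v → G.Adj v u

/-- `v` is an isolated vertex (degree `0`). -/
def IsIsolatedVertex {V : Type*} (G : SimpleGraph V) (v : V) : Prop :=
  ∀ u, ¬ G.Adj v u

/-- `v` is a leaf (degree `1`). -/
def IsLeaf {V : Type*} (G : SimpleGraph V) (v : V) : Prop :=
  ∃! u, G.Adj v u

/-- `v` is a strong support vertex: adjacent to at least two leaves. -/
def IsStrongSupport {V : Type*} (G : SimpleGraph V) (v : V) : Prop :=
  ∃ u w, u ≠ w ∧ G.Adj v u ∧ G.Adj v w ∧ IsLeaf G u ∧ IsLeaf G w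

section AuxGame

open Finset

variable {V : Type*} [Fintype V] [DecidableEq V] {G : SimpleGraph V}

/-- number of unplayed vertices -/
def unplayed (D S : Finset V) : ℕ := (Finset.univ \ (D ∪ S)).card

lemma unplayed_insert_left {v : V} {D S : Finset V} (hD : v ∉ D) (hS : v ∉ S) :
    unplayed (insert v D) S < unplayed D S := by
  apply Finset.card_lt_card
  constructor
  · intro x hx
    simp only [mem_sdiff, mem_union, mem_insert] at *
    tauto
  · intro hsub
    have hv : v ∈ Finset.univ \ (D ∪ S) := by simp [hD, hS]
    have := hsub hv
    simp at this

lemma unplayed_insert_right {v : V} {D S : Finset V} (hD : v ∉ D) (hS : v ∉ S) :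
    unplayed D (insert v S) < unplayed D S := by
  apply Finset.card_lt_card
  constructor
  · intro x hx
    simp only [mem_sdiff, mem_union, mem_insert] at *
    tauto
  · intro hsub
    have hv : v ∈ Finset.univ \ (D ∪ S) := by simp [hD, hS]
    have := hsub hv
    simp at this

lemma domWinD_zero {D S : Finset V} (h : DomWinD G D S 0) : IsDomSet G D := by
  cases h with
  | done _ _ _ hd => exact hd

lemma domWinS_zero {D S : Finset V} (h : DomWinS G D S 0) : IsDomSet G D := by
  cases h with
  | done _ _ _ hd => exact hd
  | step _ _ _ hex hall =>
    obtain ⟨w, h1, h2⟩ := hex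
    exact domWinD_zero (hall w h1 h2)

lemma domWin_mono :
    ∀ n (D S : Finset V), unplayed D S = n →
    (∀ k k', k ≤ k' → DomWinD G D S k → DomWinD G D S k') ∧
    (∀ k k', k ≤ k' → DomWinS G D S k → DomWinS G D S k') := by
  intro n
  induction n using Nat.strong_induction_on with
  | _ n ih =>
    intro D S hn
    constructor
    · intro k k' hk h
      cases h with
      | done _ _ _ hd => exact DomWinD.done _ _ _ hd
      | step _ _ k0 v hvD hvS h' =>
        obtain ⟨k'', rfl⟩ : ∃ k'', k' = k'' + 1 := ⟨k' - 1, by omega⟩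
        exact DomWinD.step _ _ _ v hvD hvS
          ((ih _ (hn ▸ unplayed_insert_left hvD hvS) _ _ rfl).2 _ _ (by omega) h')
    · intro k k' hk h
      cases h with
      | done _ _ _ hd => exact DomWinS.done _ _ _ hd
      | step _ _ _ hex hall =>
        refine DomWinS.step _ _ _ hex (fun w hwD hwS => ?_)
        exact (ih _ (hn ▸ unplayed_insert_right hwD hwS) _ _ rfl).1 _ _ hk (hall w hwD hwS)

lemma domWinD_mono {D S : Finset V} {k k' : ℕ} (hk : k ≤ k') (h : DomWinD G D S k) :
    DomWinD G D S k' := (domWin_mono _ D S rfl).1 _ _ hk h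

lemma domWinS_mono {D S : Finset V} {k k' : ℕ} (hk : k ≤ k') (h : DomWinS G D S k) :
    DomWinS G D S k' := (domWin_mono _ D S rfl).2 _ _ hk h

/-- Dominator's wins are antitone in Staller's set; in particular a move by
Staller can be "undone", and a `DomWinS` position is also `DomWinD`. -/
lemma domWin_anti :
    ∀ n (D S : Finset V), unplayed D S = n → ∀ S' ⊆ S, ∀ k,
    (DomWinS G D S k → DomWinD G D S' k) ∧
    (DomWinD G D S k → DomWinD G D S' k) ∧
    (DomWinS G D S k → DomWinS G D S' k) := by
  intro n
  induction n using Nat.strong_induction_on with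
  | _ n ih =>
    intro D S hn
    have third : ∀ S' ⊆ S, ∀ k, DomWinS G D S k → DomWinD G D S' k := by
      intro S' hS' k h
      cases h with
      | done _ _ _ hd => exact DomWinD.done _ _ _ hd
      | step _ _ _ hex hall =>
        obtain ⟨w, hwD, hwS⟩ := hex
        exact (ih _ (hn ▸ unplayed_insert_right hwD hwS) _ _ rfl _
          (hS'.trans (Finset.subset_insert _ _)) k).2.1 (hall w hwD hwS)
    intro S' hS' k
    refine ⟨third S' hS' k, ?_, ?_⟩
    · intro h
      cases h with
      | done _ _ _ hd => exact DomWinD.done _ _ _ hd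
      | step _ _ k0 v hvD hvS h' =>
        exact DomWinD.step _ _ _ v hvD (fun hc => hvS (hS' hc))
          ((ih _ (hn ▸ unplayed_insert_left hvD hvS) _ _ rfl S' hS' k0).2.2 h')
    · intro h
      cases h with
      | done _ _ _ hd => exact DomWinS.done _ _ _ hd
      | step _ _ _ hex hall =>
        obtain ⟨w0, hw0D, hw0S⟩ := hex
        refine DomWinS.step _ _ _ ⟨w0, hw0D, fun hc => hw0S (hS' hc)⟩ (fun w hwD hwS' => ?_)
        by_cases hwS : w ∈ S
        · exact third (insert w S') (Finset.insert_subset hwS hS') k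
            (DomWinS.step _ _ _ ⟨w0, hw0D, hw0S⟩ hall)
        · exact (ih _ (hn ▸ unplayed_insert_right hwD hwS) _ _ rfl (insert w S')
            (Finset.insert_subset_insert _ hS') k).2.1 (hall w hwD hwS)

lemma domWinS_pass {D S : Finset V} {k : ℕ} (h : DomWinS G D S k) : DomWinD G D S k :=
  (domWin_anti _ D S rfl S subset_rfl k).1 h

lemma domWinD_anti {D S S' : Finset V} {k : ℕ} (hS' : S' ⊆ S) (h : DomWinD G D S k) :
    DomWinD G D S' k := (domWin_anti _ D S rfl S' hS' k).2.1 h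

end AuxGame
section AuxGame2

open Finset

variable {V : Type*} [Fintype V] [DecidableEq V] {G : SimpleGraph V}

/-- Staller's wins are antitone in Dominator's set. -/
lemma stalWin_anti :
    ∀ n (D S : Finset V), unplayed D S = n → ∀ D' ⊆ D, ∀ k,
    (StalWinD G D S k → StalWinS G D' S k) ∧
    (StalWinS G D S k → StalWinS G D' S k) ∧
    (StalWinD G D S k → StalWinD G D' S k) := by
  intro n
  induction n using Nat.strong_induction_on with
  | _ n ih =>
    intro D S hn
    have third : ∀ D' ⊆ D, ∀ k, StalWinD G D S k → StalWinS G D' S k := by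
      intro D' hD' k h
      cases h with
      | done _ _ _ hd => exact StalWinS.done _ _ _ hd
      | step _ _ _ hex hall =>
        obtain ⟨v, hvD, hvS⟩ := hex
        exact (ih _ (hn ▸ unplayed_insert_left hvD hvS) _ _ rfl _
          (hD'.trans (Finset.subset_insert _ _)) k).2.1 (hall v hvD hvS)
    intro D' hD' k
    refine ⟨third D' hD' k, ?_, ?_⟩
    · intro h
      cases h with
      | done _ _ _ hd => exact StalWinS.done _ _ _ hd
      | step _ _ k0 w hwD hwS h' =>
        exact StalWinS.step _ _ _ w (fun hc => hwD (hD' hc)) hwS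
          ((ih _ (hn ▸ unplayed_insert_right hwD hwS) _ _ rfl D' hD' k0).2.2 h')
    · intro h
      cases h with
      | done _ _ _ hd => exact StalWinD.done _ _ _ hd
      | step _ _ _ hex hall =>
        obtain ⟨v0, hv0D, hv0S⟩ := hex
        refine StalWinD.step _ _ _ ⟨v0, fun hc => hv0D (hD' hc), hv0S⟩ (fun v hvD' hvS => ?_)
        by_cases hvD : v ∈ D
        · exact third (insert v D') (Finset.insert_subset hvD hD') k
            (StalWinD.step _ _ _ ⟨v0, hv0D, hv0S⟩ hall)
        · exact (ih _ (hn ▸ unplayed_insert_left hvD hvS) _ _ rfl (insert v D')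
            (Finset.insert_subset_insert _ hD') k).2.1 (hall v hvD hvS)

lemma stalWinD_pass {D S : Finset V} {k : ℕ} (h : StalWinD G D S k) : StalWinS G D S k :=
  (stalWin_anti _ D S rfl D subset_rfl k).1 h

lemma isDomSet_mono {D D' : Finset V} (h : D ⊆ D') (hd : IsDomSet G D) : IsDomSet G D' := by
  intro v
  rcases hd v with hv | ⟨u, hu, hadj⟩
  · exact Or.inl (h hv)
  · exact Or.inr ⟨u, h hu, hadj⟩

lemma stallerWon_mono {S S' : Finset V} (h : S ⊆ S') (hw : StallerWon G S) :
    StallerWon G S' := by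
  obtain ⟨v, hv, hnb⟩ := hw
  exact ⟨v, h hv, fun u hu => h (hnb u hu)⟩

lemma stallerWon_not_dom {D S : Finset V} (hw : StallerWon G S)
    (hdis : ∀ v ∈ D, v ∉ S) (hd : IsDomSet G D) : False := by
  obtain ⟨v, hvS, hnb⟩ := hw
  rcases hd v with hv | ⟨u, hu, hadj⟩
  · exact hdis v hv hvS
  · exact hdis u hu (hnb u (G.adj_symm hadj))

/-- if Staller has already won, Dominator cannot win. -/
lemma noDomWin :
    ∀ n (D S : Finset V), unplayed D S = n → StallerWon G S → (∀ v ∈ D, v ∉ S) → ∀ k,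
    (¬ DomWinD G D S k) ∧ (¬ DomWinS G D S k) := by
  intro n
  induction n using Nat.strong_induction_on with
  | _ n ih =>
    intro D S hn hw hdis k
    constructor
    · intro h
      cases h with
      | done _ _ _ hd => exact stallerWon_not_dom hw hdis hd
      | step _ _ k0 v hvD hvS h' =>
        refine (ih _ (hn ▸ unplayed_insert_left hvD hvS) _ _ rfl hw ?_ k0).2 h'
        intro x hx
        rcases Finset.mem_insert.mp hx with rfl | hx
        · exact hvS
        · exact hdis x hx
    · intro h
      cases h with
      | done _ _ _ hd => exact stallerWon_not_dom hw hdis hd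
      | step _ _ _ hex hall =>
        obtain ⟨w, hwD, hwS⟩ := hex
        refine (ih _ (hn ▸ unplayed_insert_right hwD hwS) _ _ rfl
          (stallerWon_mono (Finset.subset_insert _ _) hw) ?_ k).1 (hall w hwD hwS)
        intro x hx hc
        rcases Finset.mem_insert.mp hc with rfl | hc
        · exact hwD hx
        · exact hdis x hx hc

/-- if Dominator's set already dominates, Staller cannot win. -/
lemma noStalWin :
    ∀ n (D S : Finset V), unplayed D S = n → IsDomSet G D → (∀ v ∈ D, v ∉ S) → ∀ k,
    (¬ StalWinS G D S k) ∧ (¬ StalWinD G D S k) := by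
  intro n
  induction n using Nat.strong_induction_on with
  | _ n ih =>
    intro D S hn hd hdis k
    constructor
    · intro h
      cases h with
      | done _ _ _ hw => exact stallerWon_not_dom hw hdis hd
      | step _ _ k0 w hwD hwS h' =>
        refine (ih _ (hn ▸ unplayed_insert_right hwD hwS) _ _ rfl hd ?_ k0).2 h'
        intro x hx hc
        rcases Finset.mem_insert.mp hc with rfl | hc
        · exact hwD hx
        · exact hdis x hx hc
    · intro h
      cases h with
      | done _ _ _ hw => exact stallerWon_not_dom hw hdis hd
      | step _ _ _ hex hall =>
        obtain ⟨v, hvD, hvS⟩ := hex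
        refine (ih _ (hn ▸ unplayed_insert_left hvD hvS) _ _ rfl
          (isDomSet_mono (Finset.subset_insert _ _) hd) ?_ k).1 (hall v hvD hvS)
        intro x hx
        rcases Finset.mem_insert.mp hx with rfl | hx
        · exact hvS
        · exact hdis x hx

/-- Both players cannot simultaneously have winning strategies. -/
lemma clash :
    ∀ n (D S : Finset V), unplayed D S = n → (∀ v ∈ D, v ∉ S) → ∀ t k,
    (StalWinS G D S t → DomWinS G D S k → False) ∧
    (StalWinD G D S t → DomWinD G D S k → False) := by
  intro n
  induction n using Nat.strong_induction_on with
  | _ n ih =>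
    intro D S hn hdis t k
    constructor
    · intro hst hdom
      cases hst with
      | done _ _ _ hw => exact (noDomWin _ D S rfl hw hdis k).2 hdom
      | step _ _ t0 w hwD hwS hst' =>
        cases hdom with
        | done _ _ _ hd =>
          exact (noStalWin _ D S rfl hd hdis _).1 (StalWinS.step _ _ _ w hwD hwS hst')
        | step _ _ _ hex hall =>
          refine (ih _ (hn ▸ unplayed_insert_right hwD hwS) _ _ rfl ?_ t0 k).2
            hst' (hall w hwD hwS)
          intro x hx hc
          rcases Finset.mem_insert.mp hc with rfl | hc
          · exact hwD hx
          · exact hdis x hx hc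
    · intro hst hdom
      cases hdom with
      | done _ _ _ hd => exact (noStalWin _ D S rfl hd hdis t).2 hst
      | step _ _ k0 v hvD hvS hdom' =>
        cases hst with
        | done _ _ _ hw =>
          exact (noDomWin _ D S rfl hw hdis _).1 (DomWinD.step _ _ _ v hvD hvS hdom')
        | step _ _ _ hex hall =>
          refine (ih _ (hn ▸ unplayed_insert_left hvD hvS) _ _ rfl ?_ t k0).1
            (hall v hvD hvS) hdom'
          intro x hx
          rcases Finset.mem_insert.mp hx with rfl | hx
          · exact hvS
          · exact hdis x hx

end AuxGame2
section Corona

open Finset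

variable {α β : Type*} [Fintype α] [DecidableEq α] [Fintype β] [DecidableEq β]
variable {G : SimpleGraph α} {H : SimpleGraph β}

lemma corona_adj_inl_inl {a a' : α} :
    (coronaProd G H).Adj (Sum.inl a) (Sum.inl a') ↔ G.Adj a a' := Iff.rfl

lemma corona_adj_inl_inr {a : α} {p : α × β} :
    (coronaProd G H).Adj (Sum.inl a) (Sum.inr p) ↔ a = p.1 := Iff.rfl

lemma corona_adj_inr_inl {a : α} {p : α × β} :
    (coronaProd G H).Adj (Sum.inr p) (Sum.inl a) ↔ a = p.1 := Iff.rfl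

lemma corona_adj_inr_inr {p q : α × β} :
    (coronaProd G H).Adj (Sum.inr p) (Sum.inr q) ↔ p.1 = q.1 ∧ H.Adj p.2 q.2 := Iff.rfl

/-- the trace of a set of corona vertices inside the copy of `H` over `a`. -/
def proj (a : α) (T : Finset (α ⊕ α × β)) : Finset β :=
  Finset.univ.filter (fun b => Sum.inr (a, b) ∈ T)

@[simp] lemma mem_proj {a : α} {T : Finset (α ⊕ α × β)} {b : β} :
    b ∈ proj a T ↔ Sum.inr (a, b) ∈ T := by simp [proj]

lemma proj_insert_inr {a : α} {b : β} {T : Finset (α ⊕ α × β)} :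
    proj a (insert (Sum.inr (a, b)) T) = insert b (proj a T) := by
  ext x; simp [Prod.ext_iff, eq_comm]

lemma proj_insert_ne {a : α} {v : α ⊕ α × β} {T : Finset (α ⊕ α × β)}
    (hv : ∀ b : β, v ≠ Sum.inr (a, b)) :
    proj a (insert v T) = proj a T := by
  ext x
  simp only [mem_proj, Finset.mem_insert]
  constructor
  · rintro (h | h)
    · exact absurd h.symm (hv x)
    · exact h
  · exact Or.inr

lemma proj_empty {a : α} : proj a (∅ : Finset (α ⊕ α × β)) = ∅ := by
  ext x; simp

lemma proj_mono {a : α} {T T' : Finset (α ⊕ α × β)} (h : T ⊆ T') : proj a T ⊆ proj a T' := by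
  intro x hx; simp only [mem_proj] at *; exact h hx

/-- If the `a`-th copy of `H` is internally dominated, or `inl a` is owned,
for every `a`, then the corona is dominated. -/
lemma corona_dom_of {D : Finset (α ⊕ α × β)} (hβ : Nonempty β)
    (hall : ∀ a, Sum.inl a ∈ D ∨ IsDomSet H (proj a D)) : IsDomSet (coronaProd G H) D := by
  intro v
  match v with
  | Sum.inl a =>
    rcases hall a with h | h
    · exact Or.inl h
    · obtain ⟨b⟩ := hβ
      have hb : b ∈ proj a D ∨ ∃ u ∈ proj a D, H.Adj u b := h b
      have : ∃ b', b' ∈ proj a D := by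
        rcases hb with hb | ⟨u, hu, _⟩
        · exact ⟨b, hb⟩
        · exact ⟨u, hu⟩
      obtain ⟨b', hb'⟩ := this
      exact Or.inr ⟨Sum.inr (a, b'), mem_proj.mp hb', rfl⟩
  | Sum.inr (a, b) =>
    rcases hall a with h | h
    · exact Or.inr ⟨Sum.inl a, h, rfl⟩
    · rcases h b with hb | ⟨u, hu, hadj⟩
      · exact Or.inl (mem_proj.mp hb)
      · exact Or.inr ⟨Sum.inr (a, u), mem_proj.mp hu, ⟨rfl, hadj⟩⟩

/-- If the corona is dominated by `D` but `inl a ∉ D`, then the trace of `D`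
in the `a`-th copy dominates `H`. -/
lemma proj_dom_of_corona {D : Finset (α ⊕ α × β)} {a : α}
    (hd : IsDomSet (coronaProd G H) D) (ha : Sum.inl a ∉ D) : IsDomSet H (proj a D) := by
  intro b
  rcases hd (Sum.inr (a, b)) with h | ⟨u, hu, hadj⟩
  · exact Or.inl (mem_proj.mpr h)
  · match u with
    | Sum.inl a' =>
      have : a' = a := hadj
      exact absurd (this ▸ hu) ha
    | Sum.inr (a', b') =>
      obtain ⟨h1, h2⟩ : a' = a ∧ H.Adj b' b := hadj
      subst h1
      exact Or.inr ⟨b', mem_proj.mpr hu, h2⟩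

lemma not_isDomSet_empty (hβ : Nonempty β) : ¬ IsDomSet H (∅ : Finset β) := by
  intro h
  obtain ⟨b⟩ := hβ
  rcases h b with hb | ⟨u, hu, _⟩
  · simp at hb
  · simp at hu

/-- Lift a winning position of Staller in the copy over `a` to the corona,
provided she owns `inl a`. -/
lemma stallerWon_lift {S : Finset (α ⊕ α × β)} {a : α}
    (ha : Sum.inl a ∈ S) (hw : StallerWon H (proj a S)) :
    StallerWon (coronaProd G H) S := by
  obtain ⟨b, hb, hnb⟩ := hw
  refine ⟨Sum.inr (a, b), mem_proj.mp hb, fun u hu => ?_⟩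
  match u with
  | Sum.inl a' =>
    have : a' = a := hu
    exact this ▸ ha
  | Sum.inr (a', b') =>
    obtain ⟨h1, h2⟩ : a = a' ∧ H.Adj b b' := hu
    subst h1
    exact mem_proj.mp (hnb b' h2)

/-- The punishment lemma: if Staller owns `inl a`, the copy over `a` is
untouched otherwise, and she wins the S-game on `H`, then she wins in the
corona no matter what Dominator does elsewhere. -/
lemma punish_lift :
    ∀ n (D S : Finset (α ⊕ α × β)) (a : α) (t : ℕ), unplayed D S = n → Sum.inl a ∈ S →
    (StalWinS H (proj a D) (proj a S) t → StalWinS (coronaProd G H) D S t) ∧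
    (StalWinD H (proj a D) (proj a S) t → StalWinD (coronaProd G H) D S t) := by
  intro n
  induction n using Nat.strong_induction_on with
  | _ n ih =>
    intro D S a t hn ha
    constructor
    · intro h
      cases h with
      | done _ _ _ hw => exact StalWinS.done _ _ _ (stallerWon_lift ha hw)
      | step _ _ t0 w hwD hwS h' =>
        have hwD' : Sum.inr (a, w) ∉ D := by simpa using hwD
        have hwS' : Sum.inr (a, w) ∉ S := by simpa using hwS
        refine StalWinS.step _ _ _ (Sum.inr (a, w)) hwD' hwS' ?_
        have hrec := (ih _ (hn ▸ unplayed_insert_right hwD' hwS') _ _ a t0 rfl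
          (Finset.mem_insert_of_mem ha)).2
        rw [proj_insert_inr] at hrec
        exact hrec h'
    · intro h
      cases h with
      | done _ _ _ hw => exact StalWinD.done _ _ _ (stallerWon_lift ha hw)
      | step _ _ _ hex hall =>
        obtain ⟨w0, hw0D, hw0S⟩ := hex
        refine StalWinD.step _ _ _
          ⟨Sum.inr (a, w0), by simpa using hw0D, by simpa using hw0S⟩ ?_
        intro v hvD hvS
        have houtside : (∀ b : β, v ≠ Sum.inr (a, b)) →
            StalWinS (coronaProd G H) (insert v D) S t := by
          intro hne
          have hpass : StalWinS H (proj a D) (proj a S) t :=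
            stalWinD_pass (StalWinD.step _ _ _ ⟨w0, hw0D, hw0S⟩ hall)
          have hrec := (ih _ (hn ▸ unplayed_insert_left hvD hvS) _ _ a t rfl ha).1
          rw [proj_insert_ne hne] at hrec
          exact hrec hpass
        match v, hvD, hvS with
        | Sum.inl a', hvD, hvS => exact houtside (fun b h => by simp at h)
        | Sum.inr (a', bv), hvD, hvS =>
          by_cases haa : a' = a
          · subst haa
            have h1 : StalWinS H (insert bv (proj a' D)) (proj a' S) t :=
              hall bv (by simpa using hvD) (by simpa using hvS)
            have hrec := (ih _ (hn ▸ unplayed_insert_left hvD hvS) _ _ a' t rfl ha).1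
            rw [proj_insert_inr] at hrec
            exact hrec h1
          · exact houtside (by simp [haa])

end Corona
section AuxCnt

open Finset

variable {V : Type*} [Fintype V] [DecidableEq V] {G : SimpleGraph V}

/-- If Dominator can win within `k` moves, then `D` extends to a dominating
set avoiding `S` with at most `k` extra vertices. -/
lemma cnt :
    ∀ n (D S : Finset V), unplayed D S = n → (∀ v ∈ D, v ∉ S) → ∀ k,
    (DomWinD G D S k → ∃ D', D ⊆ D' ∧ (∀ v ∈ D', v ∉ S) ∧ IsDomSet G D' ∧ (D' \ D).card ≤ k) ∧
    (DomWinS G D S k → ∃ D', D ⊆ D' ∧ (∀ v ∈ D', v ∉ S) ∧ IsDomSet G D' ∧ (D' \ D).card ≤ k) := by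
  intro n
  induction n using Nat.strong_induction_on with
  | _ n ih =>
    intro D S hn hdis k
    constructor
    · intro h
      cases h with
      | done _ _ _ hd => exact ⟨D, subset_rfl, hdis, hd, by simp⟩
      | step _ _ k0 v hvD hvS h' =>
        have hdis' : ∀ x ∈ insert v D, x ∉ S := by
          intro x hx
          rcases Finset.mem_insert.mp hx with rfl | hx
          · exact hvS
          · exact hdis x hx
        obtain ⟨D', hsub, hdis'', hdom, hcard⟩ :=
          (ih _ (hn ▸ unplayed_insert_left hvD hvS) _ _ rfl hdis' k0).2 h'
        refine ⟨D', (Finset.subset_insert _ _).trans hsub, hdis'', hdom, ?_⟩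
        have hsubset : D' \ D ⊆ insert v (D' \ insert v D) := by
          intro x hx
          rcases Finset.mem_sdiff.mp hx with ⟨hx1, hx2⟩
          by_cases hxv : x = v
          · exact Finset.mem_insert.mpr (Or.inl hxv)
          · exact Finset.mem_insert.mpr (Or.inr (Finset.mem_sdiff.mpr
              ⟨hx1, fun hc => (Finset.mem_insert.mp hc).elim hxv hx2⟩))
        calc (D' \ D).card ≤ (insert v (D' \ insert v D)).card := Finset.card_le_card hsubset
          _ ≤ (D' \ insert v D).card + 1 := Finset.card_insert_le _ _
          _ ≤ k0 + 1 := by omega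
    · intro h
      cases h with
      | done _ _ _ hd => exact ⟨D, subset_rfl, hdis, hd, by simp⟩
      | step _ _ _ hex hall =>
        obtain ⟨w, hwD, hwS⟩ := hex
        have hdis' : ∀ x ∈ D, x ∉ insert w S := by
          intro x hx hc
          rcases Finset.mem_insert.mp hc with rfl | hc
          · exact hwD hx
          · exact hdis x hx hc
        obtain ⟨D', hsub, hdis'', hdom, hcard⟩ :=
          (ih _ (hn ▸ unplayed_insert_right hwD hwS) _ _ rfl hdis' k).1 (hall w hwD hwS)
        exact ⟨D', hsub, fun x hx hc => hdis'' x hx (Finset.mem_insert_of_mem hc), hdom, hcard⟩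

end AuxCnt

section Race

open Finset

variable {α β : Type*} [Fintype α] [DecidableEq α] [Fintype β] [DecidableEq β]
variable {G : SimpleGraph α} {H : SimpleGraph β}

/-- The copies are disjoint, so the projections of a set have total size at
most the size of the set. -/
lemma sum_proj_card_le (W : Finset α) (T : Finset (α ⊕ α × β)) :
    ∑ a ∈ W, (proj a T).card ≤ T.card := by
  classical
  have h1 : ∀ a ∈ W, (proj a T).card = (T.filter (fun v => ∃ b, v = Sum.inr (a, b))).card := by
    intro a _
    apply Finset.card_bij (fun b _ => Sum.inr (a, b))
    · intro b hb
      simp only [Finset.mem_filter]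
      exact ⟨mem_proj.mp hb, b, rfl⟩
    · intro b1 h1 b2 h2 he
      simpa using he
    · intro v hv
      obtain ⟨hvT, b, rfl⟩ := Finset.mem_filter.mp hv
      exact ⟨b, mem_proj.mpr hvT, rfl⟩
  rw [Finset.sum_congr rfl h1]
  rw [← Finset.card_biUnion]
  · apply Finset.card_le_card
    intro x hx
    obtain ⟨a, _, hx⟩ := Finset.mem_biUnion.mp hx
    exact (Finset.mem_filter.mp hx).1
  · intro a1 _ a2 _ hne
    simp only [Finset.disjoint_left, Finset.mem_filter]
    rintro x ⟨_, b1, rfl⟩ ⟨_, b2, he⟩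
    simp only [Sum.inr.injEq, Prod.mk.injEq] at he
    exact hne he.1

/-- Staller's race strategy: she grabs the `inl`-vertices of untouched copies
one by one; Dominator must answer in the grabbed copy each time, and at the
end he must still complete a dominating set of each deficient copy. -/
lemma raceLB {m : ℕ} (hβ : Nonempty β) (hm1 : 1 ≤ m)
    (hmγ : ∀ A : Finset β, IsDomSet H A → m ≤ A.card)
    {t : ℕ} (hst : StalWinS H ∅ ∅ t) :
    ∀ n (D S : Finset (α ⊕ α × β)) (U W : Finset α), unplayed D S = n →
    (∀ v ∈ D, v ∉ S) →
    (∀ a ∈ U, Sum.inl a ∉ D ∧ Sum.inl a ∉ S ∧ ∀ b, Sum.inr (a,b) ∉ D ∧ Sum.inr (a,b) ∉ S) →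
    (∀ a ∈ W, Sum.inl a ∈ S) →
    ∀ k, DomWinS (coronaProd G H) D S k →
      U.card * m + (∑ a ∈ W, (m - (proj a D).card)) ≤ k := by
  intro n
  induction n using Nat.strong_induction_on with
  | _ n ih =>
    intro D S U W hn hdis hU hW k hwin
    by_cases hUe : U = ∅
    · -- endgame counting
      subst hUe
      obtain ⟨D', hsub, hdis', hdom, hcard⟩ := (cnt _ D S rfl hdis k).2 hwin
      have hWm : ∀ a ∈ W, m - (proj a D).card ≤ (proj a (D' \ D)).card := by
        intro a haW
        have hnotin : Sum.inl a ∉ D' := fun hc => hdis' _ hc (hW a haW)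
        have hdomH : IsDomSet H (proj a D') := proj_dom_of_corona hdom hnotin
        have h1 : m ≤ (proj a D').card := hmγ _ hdomH
        have h2 : proj a D' ⊆ proj a D ∪ proj a (D' \ D) := by
          intro b hb
          simp only [mem_proj, Finset.mem_union, Finset.mem_sdiff] at *
          by_cases hc : Sum.inr (a, b) ∈ D
          · exact Or.inl hc
          · exact Or.inr ⟨hb, hc⟩
        have h3 : (proj a D').card ≤ (proj a D).card + (proj a (D' \ D)).card :=
          (Finset.card_le_card h2).trans (Finset.card_union_le _ _)
        omega
      calc (0 : ℕ) * m + ∑ a ∈ W, (m - (proj a D).card)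
          = ∑ a ∈ W, (m - (proj a D).card) := by ring_nf
        _ ≤ ∑ a ∈ W, (proj a (D' \ D)).card := Finset.sum_le_sum hWm
        _ ≤ (D' \ D).card := sum_proj_card_le _ _
        _ ≤ k := hcard
      -- fix cardinality of ∅
    · obtain ⟨a0, ha0⟩ := Finset.nonempty_iff_ne_empty.mpr hUe
      obtain ⟨h1, h2, h3⟩ := hU a0 ha0
      have hnodom : ¬ IsDomSet (coronaProd G H) D := by
        intro hd
        exact not_isDomSet_empty hβ (by
          have := proj_dom_of_corona (G := G) hd h1
          have hpe : proj a0 D = ∅ := by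
            ext b; simp only [mem_proj, Finset.notMem_empty, iff_false]
            exact (h3 b).1
          rwa [hpe] at this)
      cases hwin with
      | done _ _ _ hd => exact absurd hd hnodom
      | step _ _ _ hex hall =>
        have hd1 := hall (Sum.inl a0) h1 h2
        cases hd1 with
        | done _ _ _ hd => exact absurd hd hnodom
        | step _ _ k0 v hvD hvS hwin' =>
          set S' := insert (Sum.inl a0) S with hS'
          -- is Dominator's reply inside copy a0 ?
          by_cases hin : ∃ b, v = Sum.inr (a0, b)
          · obtain ⟨b, rfl⟩ := hin
            have hdis2 : ∀ x ∈ insert (Sum.inr (a0, b)) D, x ∉ S' := by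
              intro x hx
              rcases Finset.mem_insert.mp hx with rfl | hx
              · exact hvS
              · intro hc
                rcases Finset.mem_insert.mp hc with he | hc
                · exact h1 (he ▸ hx)
                · exact hdis x hx hc
            have hU2 : ∀ a ∈ U.erase a0, Sum.inl a ∉ insert (Sum.inr (a0, b)) D ∧
                Sum.inl a ∉ S' ∧ ∀ b', Sum.inr (a,b') ∉ insert (Sum.inr (a0, b)) D ∧
                Sum.inr (a,b') ∉ S' := by
              intro a ha
              obtain ⟨hne, haU⟩ := Finset.mem_erase.mp ha
              obtain ⟨q1, q2, q3⟩ := hU a haU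
              refine ⟨by simp [q1], by simp [hS', q2, hne], fun b' => ⟨?_, ?_⟩⟩
              · simp only [Finset.mem_insert]
                push_neg
                exact ⟨by simp [hne], (q3 b').1⟩
              · simp only [hS', Finset.mem_insert]
                push_neg
                exact ⟨by simp, (q3 b').2⟩
            have hW2 : ∀ a ∈ insert a0 W, Sum.inl a ∈ S' := by
              intro a ha
              rcases Finset.mem_insert.mp ha with rfl | ha
              · exact Finset.mem_insert_self _ _
              · exact Finset.mem_insert_of_mem (hW a ha)
            have hmeas : unplayed (insert (Sum.inr (a0, b)) D) S' < n := by
              calc unplayed (insert (Sum.inr (a0, b)) D) S' < unplayed D S' :=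
                    unplayed_insert_left hvD hvS
                _ < unplayed D S := unplayed_insert_right h1 h2
                _ ≤ n := hn.le
            have hrec := ih _ hmeas _ _ (U.erase a0) (insert a0 W) rfl hdis2 hU2 hW2 k0 hwin'
            -- arithmetic
            have ha0W : a0 ∉ W := by
              intro hc
              exact h2 (hW a0 hc)
            rw [Finset.sum_insert ha0W] at hrec
            have hproj1 : proj a0 (insert (Sum.inr (a0, b)) D) = insert b (proj a0 D) :=
              proj_insert_inr
            have hpe : proj a0 D = ∅ := by
              ext b'; simp only [mem_proj, Finset.notMem_empty, iff_false]
              exact (h3 b').1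
            have hcard1 : (proj a0 (insert (Sum.inr (a0, b)) D)).card = 1 := by
              rw [hproj1, hpe]; simp
            have hothers : ∀ a ∈ W, proj a (insert (Sum.inr (a0, b)) D) = proj a D := by
              intro a ha
              apply proj_insert_ne
              intro b' hc
              simp only [Sum.inr.injEq, Prod.mk.injEq] at hc
              exact ha0W (hc.1 ▸ ha)
            rw [Finset.sum_congr rfl (fun a ha => by rw [hothers a ha])] at hrec
            have hcardU : (U.erase a0).card = U.card - 1 := Finset.card_erase_of_mem ha0
            have hUpos : 1 ≤ U.card := Finset.card_pos.mpr ⟨a0, ha0⟩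
            rw [hcard1] at hrec
            have hrw : U.card * m = (U.erase a0).card * m + m := by
              rw [hcardU, Nat.sub_one_mul]
              have := Nat.le_mul_of_pos_left m (show 0 < U.card by omega)
              omega
            omega
          · -- Dominator deviated : Staller punishes in copy a0 and wins
            exfalso
            have hproj0D : proj a0 (insert v D) = ∅ := by
              rw [proj_insert_ne (fun b hc => hin ⟨b, hc⟩)]
              ext b'; simp only [mem_proj, Finset.notMem_empty, iff_false]
              exact (h3 b').1
            have hproj0S : proj a0 S' = ∅ := by
              rw [hS', proj_insert_ne (fun b hc => by simp at hc)]
              ext b'; simp only [mem_proj, Finset.notMem_empty, iff_false]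
              exact (h3 b').2
            have hstal : StalWinS (coronaProd G H) (insert v D) S' t := by
              have := (punish_lift (G := G) (H := H) _ (insert v D) S' a0 t rfl
                (Finset.mem_insert_self _ _)).1
              rw [hproj0D, hproj0S] at this
              exact this hst
            have hdis2 : ∀ x ∈ insert v D, x ∉ S' := by
              intro x hx
              rcases Finset.mem_insert.mp hx with rfl | hx
              · exact hvS
              · intro hc
                rcases Finset.mem_insert.mp hc with he | hc
                · exact h1 (he ▸ hx)
                · exact hdis x hx hc
            exact (clash _ (insert v D) S' rfl hdis2 t k0).1 hstal hwin'

end Race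
section AuxGame3

open Finset

variable {V : Type*} [Fintype V] [DecidableEq V] {G : SimpleGraph V}

lemma domWinS_not_dom {D S : Finset V} {k : ℕ} (h : DomWinS G D S k)
    (hnd : ¬ IsDomSet G D) :
    (∃ w, w ∉ D ∧ w ∉ S) ∧ ∀ w ∉ D, w ∉ S → DomWinD G D (insert w S) k := by
  cases h with
  | done _ _ _ hd => exact absurd hd hnd
  | step _ _ _ hex hall => exact ⟨hex, hall⟩

lemma domWinD_not_dom {D S : Finset V} {k : ℕ} (h : DomWinD G D S k)
    (hnd : ¬ IsDomSet G D) :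
    ∃ k' v, k = k' + 1 ∧ v ∉ D ∧ v ∉ S ∧ DomWinS G (insert v D) S k' := by
  cases h with
  | done _ _ _ hd => exact absurd hd hnd
  | step _ _ k' v hv1 hv2 h' => exact ⟨k', v, rfl, hv1, hv2, h'⟩

end AuxGame3

section MainUp

open Finset

variable {α β : Type*} [Fintype α] [DecidableEq α] [Fintype β] [DecidableEq β]
variable {G : SimpleGraph α} {H : SimpleGraph β}

/-- The status of the copy over `a`: either safe (Dominator owns `inl a`),
active (Dominator can finish the copy with `c` further moves, Staller to
move locally), or fresh (completely untouched, budget `m`). -/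
def StatusU (H : SimpleGraph β) (m : ℕ) (D S : Finset (α ⊕ α × β)) (a : α) (c : ℕ) : Prop :=
  (c = 0 ∧ Sum.inl a ∈ D) ∨
  DomWinS H (proj a D) (proj a S) c ∨
  (c = m ∧ Sum.inl a ∉ D ∧ Sum.inl a ∉ S ∧ ∀ b, Sum.inr (a, b) ∉ D ∧ Sum.inr (a, b) ∉ S)

lemma statusU_insertD {m : ℕ} {D S : Finset (α ⊕ α × β)} {a : α} {c : ℕ}
    (h : StatusU H m D S a c) {v : α ⊕ α × β}
    (hv1 : v ≠ Sum.inl a) (hv2 : ∀ b, v ≠ Sum.inr (a, b)) :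
    StatusU H m (insert v D) S a c := by
  rcases h with ⟨hc, hin⟩ | hds | ⟨hc, h1, h2, h3⟩
  · exact Or.inl ⟨hc, Finset.mem_insert_of_mem hin⟩
  · exact Or.inr (Or.inl (by rwa [proj_insert_ne hv2]))
  · refine Or.inr (Or.inr ⟨hc, ?_, h2, fun b => ⟨?_, (h3 b).2⟩⟩)
    · simp only [Finset.mem_insert]
      push_neg
      exact ⟨fun he => hv1 he.symm, h1⟩
    · simp only [Finset.mem_insert]
      push_neg
      exact ⟨fun he => hv2 b he.symm, (h3 b).1⟩

lemma statusU_insertS {m : ℕ} {D S : Finset (α ⊕ α × β)} {a : α} {c : ℕ}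
    (h : StatusU H m D S a c) {v : α ⊕ α × β}
    (hv1 : v ≠ Sum.inl a) (hv2 : ∀ b, v ≠ Sum.inr (a, b)) :
    StatusU H m D (insert v S) a c := by
  rcases h with ⟨hc, hin⟩ | hds | ⟨hc, h1, h2, h3⟩
  · exact Or.inl ⟨hc, hin⟩
  · exact Or.inr (Or.inl (by rwa [proj_insert_ne hv2]))
  · refine Or.inr (Or.inr ⟨hc, h1, ?_, fun b => ⟨(h3 b).1, ?_⟩⟩)
    · simp only [Finset.mem_insert]
      push_neg
      exact ⟨fun he => hv1 he.symm, h2⟩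
    · simp only [Finset.mem_insert]
      push_neg
      exact ⟨fun he => hv2 b he.symm, (h3 b).2⟩

lemma sum_update_budget {g : α → ℕ} {a₁ : α} {c₁ : ℕ} :
    (∑ a, Function.update g a₁ c₁ a) + g a₁ = (∑ a, g a) + c₁ := by
  rw [Finset.sum_update_of_mem (Finset.mem_univ a₁),
    ← Finset.add_sum_erase _ g (Finset.mem_univ a₁), Finset.sdiff_singleton_eq_erase]
  ring

end MainUp
section MainUp2

open Finset

variable {α β : Type*} [Fintype α] [DecidableEq α] [Fintype β] [DecidableEq β]
variable {G : SimpleGraph α} {H : SimpleGraph β}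

/-- Dominator's composite strategy in the corona product. -/
lemma mainUp (hβ : Nonempty β) {m : ℕ} (hm1 : 1 ≤ m) (hDm : DomWinD H ∅ ∅ m) :
    ∀ n (D S : Finset (α ⊕ α × β)) (f : α → ℕ), unplayed D S = n →
    (∀ a, StatusU H m D S a (f a)) →
    DomWinS (coronaProd G H) D S (∑ a, f a) := by
  intro n
  induction n using Nat.strong_induction_on with
  | _ n ih =>
    intro D S f hn hf
    classical
    set g : α → ℕ := fun a => if Sum.inl a ∈ D ∨ IsDomSet H (proj a D) then 0 else f a
      with hgdef
    have hg : ∀ a, StatusU H m D S a (g a) := by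
      intro a
      by_cases hc : Sum.inl a ∈ D ∨ IsDomSet H (proj a D)
      · have hga : g a = 0 := by rw [hgdef]; simp only; rw [if_pos hc]
        rcases hc with hc | hc
        · exact Or.inl ⟨hga, hc⟩
        · exact Or.inr (Or.inl (hga ▸ DomWinS.done _ _ _ hc))
      · have hga : g a = f a := by rw [hgdef]; simp only; rw [if_neg hc]
        rw [hga]
        rcases hf a with ⟨_, hin⟩ | hds | hfresh
        · exact absurd (Or.inl hin) hc
        · exact Or.inr (Or.inl hds)
        · exact Or.inr (Or.inr hfresh)
    have hgnorm : ∀ a, 1 ≤ g a → Sum.inl a ∉ D ∧ ¬ IsDomSet H (proj a D) := by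
      intro a hga
      by_cases hc : Sum.inl a ∈ D ∨ IsDomSet H (proj a D)
      · have : g a = 0 := by rw [hgdef]; simp only; rw [if_pos hc]
        omega
      · push_neg at hc
        exact hc
    have hgf : ∀ a, g a ≤ f a := by
      intro a
      by_cases hc : Sum.inl a ∈ D ∨ IsDomSet H (proj a D)
      · have : g a = 0 := by rw [hgdef]; simp only; rw [if_pos hc]
        omega
      · have : g a = f a := by rw [hgdef]; simp only; rw [if_neg hc]
        omega
    suffices hgoal : DomWinS (coronaProd G H) D S (∑ a, g a) by
      exact domWinS_mono (Finset.sum_le_sum (fun a _ => hgf a)) hgoal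
    by_cases hSz : ∑ a, g a = 0
    · refine DomWinS.done _ _ _ (corona_dom_of hβ (fun a => ?_))
      have hga : g a = 0 := Finset.sum_eq_zero_iff.mp hSz a (Finset.mem_univ a)
      rcases hg a with ⟨_, hin⟩ | hds | ⟨hc, _⟩
      · exact Or.inl hin
      · rw [hga] at hds
        exact Or.inr (domWinS_zero hds)
      · omega
    · have hSz1 : 1 ≤ ∑ a, g a := by omega
      obtain ⟨ap, hap⟩ : ∃ a, 1 ≤ g a := by
        by_contra hcon
        push_neg at hcon
        exact hSz (Finset.sum_eq_zero (fun a _ => by have := hcon a; omega))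
      obtain ⟨hapD, hapnd⟩ := hgnorm ap hap
      have hex : ∃ w, w ∉ D ∧ w ∉ S := by
        rcases hg ap with ⟨hc, _⟩ | hds | ⟨_, h1, h2, _⟩
        · omega
        · obtain ⟨⟨w, hw1, hw2⟩, _⟩ := domWinS_not_dom hds hapnd
          exact ⟨Sum.inr (ap, w), by simpa using hw1, by simpa using hw2⟩
        · exact ⟨Sum.inl ap, h1, h2⟩
      refine DomWinS.step _ _ _ hex (fun w hwD hwS => ?_)
      have respond : ∀ (v : α ⊕ α × β) (g' : α → ℕ), v ∉ D → v ∉ insert w S →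
          (∀ a, StatusU H m (insert v D) (insert w S) a (g' a)) →
          (∑ a, g' a) + 1 ≤ ∑ a, g a →
          DomWinD (coronaProd G H) D (insert w S) (∑ a, g a) := by
        intro v g' hv1 hv2 hst' hle
        have hmeas : unplayed (insert v D) (insert w S) < n := by
          calc unplayed (insert v D) (insert w S) < unplayed D (insert w S) :=
                unplayed_insert_left hv1 hv2
            _ < unplayed D S := unplayed_insert_right hwD hwS
            _ ≤ n := hn.le
        have hrec := ih _ hmeas _ _ g' rfl hst'
        have hrec2 : DomWinS (coronaProd G H) (insert v D) (insert w S) (∑ a, g a - 1) :=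
          domWinS_mono (by omega) hrec
        have hstep := DomWinD.step _ _ _ v hv1 hv2 hrec2
        have heq : (∑ a, g a - 1) + 1 = ∑ a, g a := by omega
        rwa [heq] at hstep
      have wasted : (∀ a, StatusU H m D (insert w S) a (g a)) →
          DomWinD (coronaProd G H) D (insert w S) (∑ a, g a) := by
        intro hst2
        rcases hst2 ap with ⟨hc, _⟩ | hds | ⟨_, h1, h2, h3⟩
        · omega
        · obtain ⟨c', v₀, hc', hv₀P, hv₀Q, hds'⟩ :=
            domWinD_not_dom (domWinS_pass hds) hapnd
          refine respond (Sum.inr (ap, v₀)) (Function.update g ap c')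
            (by simpa using hv₀P) (by simpa using hv₀Q) (fun a => ?_) ?_
          · by_cases ha : a = ap
            · subst ha
              refine Or.inr (Or.inl ?_)
              rw [Function.update_self, proj_insert_inr]
              exact hds'
            · rw [Function.update_of_ne ha]
              exact statusU_insertD (hst2 a) (fun he => by simp at he)
                (fun b he => by
                  simp only [Sum.inr.injEq, Prod.mk.injEq] at he
                  exact ha he.1.symm)
          · have := sum_update_budget (g := g) (a₁ := ap) (c₁ := c')
            omega
        · refine respond (Sum.inl ap) (Function.update g ap 0) h1 h2 (fun a => ?_) ?_
          · by_cases ha : a = ap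
            · subst ha
              exact Or.inl ⟨by simp, Finset.mem_insert_self _ _⟩
            · rw [Function.update_of_ne ha]
              exact statusU_insertD (hst2 a)
                (fun he => by simp only [Sum.inl.injEq] at he; exact ha he.symm)
                (fun b he => by simp at he)
          · have := sum_update_budget (g := g) (a₁ := ap) (c₁ := 0)
            omega
      match w, hwD, hwS with
      | Sum.inl a₁, hwD, hwS =>
        rcases hg a₁ with ⟨_, hin⟩ | hds | ⟨hcm, h1, h2, h3⟩
        · exact absurd hin hwD
        · -- wasted move on an active copy
          refine wasted (fun a => ?_)
          by_cases ha : a = a₁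
          · subst ha
            exact Or.inr (Or.inl (by rwa [proj_insert_ne (fun b he => by simp at he)]))
          · exact statusU_insertS (hg a)
              (fun he => by simp only [Sum.inl.injEq] at he; exact ha he.symm)
              (fun b he => by simp at he)
        · -- fresh copy grabbed by Staller : start the D-game inside
          obtain ⟨m', v₀, hm', hv₀1, hv₀2, hds0⟩ :=
            domWinD_not_dom hDm (not_isDomSet_empty hβ)
          have hpD : proj a₁ D = ∅ := by
            ext b; simp only [mem_proj, Finset.notMem_empty, iff_false]
            exact (h3 b).1
          have hpS : proj a₁ S = ∅ := by
            ext b; simp only [mem_proj, Finset.notMem_empty, iff_false]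
            exact (h3 b).2
          refine respond (Sum.inr (a₁, v₀)) (Function.update g a₁ m')
            (by simpa [hpD] using (h3 v₀).1) ?_ (fun a => ?_) ?_
          · intro hc
            rcases Finset.mem_insert.mp hc with he | hc
            · simp at he
            · exact (h3 v₀).2 hc
          · by_cases ha : a = a₁
            · subst ha
              refine Or.inr (Or.inl ?_)
              rw [Function.update_self, proj_insert_inr, hpD,
                proj_insert_ne (fun b he => by simp at he), hpS]
              exact hds0
            · rw [Function.update_of_ne ha]
              refine statusU_insertS (statusU_insertD (hg a)
                (fun he => by simp at he)
                (fun b he => by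
                  simp only [Sum.inr.injEq, Prod.mk.injEq] at he
                  exact ha he.1.symm))
                (fun he => by simp only [Sum.inl.injEq] at he; exact ha he.symm)
                (fun b he => by simp at he)
          · have := sum_update_budget (g := g) (a₁ := a₁) (c₁ := m')
            have hga : g a₁ = m := hcm
            omega
      | Sum.inr (a₁, b), hwD, hwS =>
        rcases hg a₁ with ⟨hc0, hin⟩ | hds | ⟨hcm, h1, h2, h3⟩
        · -- safe copy : wasted move
          refine wasted (fun a => ?_)
          by_cases ha : a = a₁
          · subst ha
            exact Or.inl ⟨hc0, hin⟩
          · exact statusU_insertS (hg a) (fun he => by simp at he)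
              (fun b' he => by
                simp only [Sum.inr.injEq, Prod.mk.injEq] at he
                exact ha he.1.symm)
        · by_cases hga : 1 ≤ g a₁
          · -- active copy : answer inside
            obtain ⟨_, hnd⟩ := hgnorm a₁ hga
            obtain ⟨_, hall⟩ := domWinS_not_dom hds hnd
            have hDnode := hall b (by simpa using hwD) (by simpa using hwS)
            obtain ⟨c', v₀, hc', hv₀P, hv₀Q, hds'⟩ := domWinD_not_dom hDnode hnd
            have hv₀b : v₀ ≠ b ∧ Sum.inr (a₁, v₀) ∉ S := by
              constructor
              · intro he
                exact hv₀Q (he ▸ Finset.mem_insert_self _ _)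
              · intro he
                exact hv₀Q (Finset.mem_insert_of_mem (mem_proj.mpr he))
            refine respond (Sum.inr (a₁, v₀)) (Function.update g a₁ c')
              (by simpa using hv₀P) ?_ (fun a => ?_) ?_
            · intro hc
              rcases Finset.mem_insert.mp hc with he | hc
              · simp only [Sum.inr.injEq, Prod.mk.injEq] at he
                exact hv₀b.1 he.2
              · exact hv₀b.2 hc
            · by_cases ha : a = a₁
              · subst ha
                refine Or.inr (Or.inl ?_)
                rw [Function.update_self, proj_insert_inr, proj_insert_inr]
                exact hds'
              · rw [Function.update_of_ne ha]
                refine statusU_insertS (statusU_insertD (hg a)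
                  (fun he => by simp at he)
                  (fun b' he => by
                    simp only [Sum.inr.injEq, Prod.mk.injEq] at he
                    exact ha he.1.symm))
                  (fun he => by simp at he)
                  (fun b' he => by
                    simp only [Sum.inr.injEq, Prod.mk.injEq] at he
                    exact ha he.1.symm)
            · have := sum_update_budget (g := g) (a₁ := a₁) (c₁ := c')
              omega
          · -- copy already internally dominated : wasted move
            have hga0 : g a₁ = 0 := by omega
            have hdom1 : IsDomSet H (proj a₁ D) := domWinS_zero (hga0 ▸ hds)
            refine wasted (fun a => ?_)
            by_cases ha : a = a₁
            · subst ha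
              refine Or.inr (Or.inl ?_)
              rw [hga0]
              exact DomWinS.done _ _ _ hdom1
            · exact statusU_insertS (hg a) (fun he => by simp at he)
                (fun b' he => by
                  simp only [Sum.inr.injEq, Prod.mk.injEq] at he
                  exact ha he.1.symm)
        · -- fresh copy : secure it with inl a₁
          refine respond (Sum.inl a₁) (Function.update g a₁ 0) h1 ?_ (fun a => ?_) ?_
          · intro hc
            rcases Finset.mem_insert.mp hc with he | hc
            · simp at he
            · exact h2 hc
          · by_cases ha : a = a₁
            · subst ha
              exact Or.inl ⟨by simp, Finset.mem_insert_self _ _⟩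
            · rw [Function.update_of_ne ha]
              refine statusU_insertS (statusU_insertD (hg a)
                (fun he => by simp only [Sum.inl.injEq] at he; exact ha he.symm)
                (fun b' he => by simp at he))
                (fun he => by simp at he)
                (fun b' he => by
                  simp only [Sum.inr.injEq, Prod.mk.injEq] at he
                  exact ha he.1.symm)
          · have := sum_update_budget (g := g) (a₁ := a₁) (c₁ := 0)
            have hga : g a₁ = m := hcm
            omega

end MainUp2
section Final

open Finset

lemma gammaMB_eq_coe {V : Type*} [DecidableEq V] {G : SimpleGraph V} {N : ℕ}
    (hub : DomWinD G ∅ ∅ N) (hlb : ∀ k, DomWinD G ∅ ∅ k → N ≤ k) :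
    gammaMB G = (N : ℕ∞) := by
  apply le_antisymm
  · exact sInf_le ⟨N, rfl, hub⟩
  · apply le_sInf
    rintro x ⟨k, rfl, hk⟩
    exact_mod_cast hlb k hk

lemma gammaMB'_eq_coe {V : Type*} [DecidableEq V] {G : SimpleGraph V} {N : ℕ}
    (hub : DomWinS G ∅ ∅ N) (hlb : ∀ k, DomWinS G ∅ ∅ k → N ≤ k) :
    gammaMB' G = (N : ℕ∞) := by
  apply le_antisymm
  · exact sInf_le ⟨N, rfl, hub⟩
  · apply le_sInf
    rintro x ⟨k, rfl, hk⟩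
    exact_mod_cast hlb k hk

end Final

theorem gammaMB_coronaProd_eqN' {α β : Type*} [Fintype α] [DecidableEq α]
    [Fintype β] [DecidableEq β] (G : SimpleGraph α) (H : SimpleGraph β)
    (hH : OutcomeN H) (heq : gammaMB H = (domNumber H : ℕ∞))
    (hn : 2 ≤ Fintype.card α) :
    (gammaMB (coronaProd G H) = 1 + ((Fintype.card α - 1 : ℕ) : ℕ∞) * gammaMB H ∧
     gammaMB' (coronaProd G H) = ((Fintype.card α : ℕ) : ℕ∞) * gammaMB H) ∧
    (gammaMB H = 2 →
      gammaMB (coronaProd G H) = ((2 * Fintype.card α - 1 : ℕ) : ℕ∞) ∧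
      gammaMB' (coronaProd G H) = ((2 * Fintype.card α : ℕ) : ℕ∞)) := by
  classical
  set m := domNumber H with hmdef
  -- basic facts about H
  obtain ⟨t, hstal⟩ := hH.2
  have hβ : Nonempty β := by
    cases hstal with
    | done _ _ _ hw =>
      obtain ⟨v, hv, _⟩ := hw
      exact ⟨v⟩
    | step _ _ _ w _ _ _ => exact ⟨w⟩
  have hmem : ∃ D : Finset β, D.card = m ∧ IsDomSet H D :=
    Nat.sInf_mem (⟨(Finset.univ : Finset β).card, Finset.univ, rfl,
      fun v => Or.inl (Finset.mem_univ v)⟩ :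
      {n : ℕ | ∃ D : Finset β, D.card = n ∧ IsDomSet H D}.Nonempty)
  have hmγ : ∀ A : Finset β, IsDomSet H A → m ≤ A.card := by
    intro A hA
    exact Nat.sInf_le ⟨A, rfl, hA⟩
  have hm1 : 1 ≤ m := by
    by_contra hcon
    obtain ⟨Dm, hc, hd⟩ := hmem
    have : Dm = ∅ := Finset.card_eq_zero.mp (by omega)
    exact not_isDomSet_empty hβ (this ▸ hd)
  -- Dominator wins the D-game on H in exactly m moves
  obtain ⟨nd, hnd⟩ := hH.1
  have hmemD : DomWinD H ∅ ∅ (sInf {n : ℕ | DomWinD H ∅ ∅ n}) :=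
    Nat.sInf_mem ⟨nd, hnd⟩
  have hgH : gammaMB H = ((sInf {n : ℕ | DomWinD H ∅ ∅ n} : ℕ) : ℕ∞) := by
    apply le_antisymm
    · exact sInf_le ⟨_, rfl, hmemD⟩
    · apply le_sInf
      rintro x ⟨k, rfl, hk⟩
      exact_mod_cast Nat.sInf_le hk
  have hmm : sInf {n : ℕ | DomWinD H ∅ ∅ n} = m := by
    have h2 := hgH.symm.trans heq
    exact_mod_cast h2
  have hDm : DomWinD H ∅ ∅ m := hmm ▸ hmemD
  have hαne : Nonempty α := Fintype.card_pos_iff.mp (by omega)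
  obtain ⟨a₀⟩ := hαne
  -- Upper bound, D-game
  have hupD : DomWinD (coronaProd G H) ∅ ∅ ((Fintype.card α - 1) * m + 1) := by
    refine DomWinD.step _ _ _ (Sum.inl a₀) (by simp) (by simp) ?_
    have hsum : (∑ a : α, if a = a₀ then 0 else m) = (Fintype.card α - 1) * m := by
      rw [← Finset.add_sum_erase _ _ (Finset.mem_univ a₀), if_pos rfl,
        Finset.sum_congr rfl (fun a ha => if_neg (Finset.ne_of_mem_erase ha)),
        Finset.sum_const, Finset.card_erase_of_mem (Finset.mem_univ a₀),
        Finset.card_univ, smul_eq_mul, zero_add]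
    rw [← hsum]
    refine mainUp hβ hm1 hDm _ _ _ _ rfl (fun a => ?_)
    by_cases ha : a = a₀
    · subst ha
      exact Or.inl ⟨if_pos rfl, by simp⟩
    · refine Or.inr (Or.inr ⟨if_neg ha, by simp [ha], by simp, fun b => by simp⟩)
  -- Upper bound, S-game
  have hupS : DomWinS (coronaProd G H) ∅ ∅ (Fintype.card α * m) := by
    have hsum : (∑ _a : α, m) = Fintype.card α * m := by
      rw [Finset.sum_const, Finset.card_univ, smul_eq_mul]
    rw [← hsum]
    refine mainUp hβ hm1 hDm _ _ _ _ rfl (fun a => ?_)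
    exact Or.inr (Or.inr ⟨rfl, by simp, by simp, fun b => by simp⟩)
  -- Lower bound, S-game
  have hlbS : ∀ k, DomWinS (coronaProd G H) ∅ ∅ k → Fintype.card α * m ≤ k := by
    intro k h
    have := raceLB (G := G) hβ hm1 hmγ hstal _ ∅ ∅ Finset.univ ∅ rfl
      (by simp) (fun a _ => ⟨by simp, by simp, fun b => ⟨by simp, by simp⟩⟩)
      (by simp) k h
    simpa [Finset.card_univ] using this
  -- Lower bound, D-game
  have hlbD : ∀ k, DomWinD (coronaProd G H) ∅ ∅ k → (Fintype.card α - 1) * m + 1 ≤ k := by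
    intro k h
    have hnodom : ¬ IsDomSet (coronaProd G H) (∅ : Finset (α ⊕ α × β)) := by
      intro hd
      have := proj_dom_of_corona (a := a₀) hd (by simp)
      rw [proj_empty] at this
      exact not_isDomSet_empty hβ this
    obtain ⟨k0, v, rfl, hv1, hv2, h'⟩ := domWinD_not_dom h hnodom
    have key : ∀ a₁ : α, (∀ a ∈ Finset.univ.erase a₁,
        Sum.inl a ∉ insert v (∅ : Finset (α ⊕ α × β)) ∧ Sum.inl a ∉ (∅ : Finset (α ⊕ α × β)) ∧
        ∀ b, Sum.inr (a,b) ∉ insert v (∅ : Finset (α ⊕ α × β)) ∧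
          Sum.inr (a,b) ∉ (∅ : Finset (α ⊕ α × β))) →
        (Fintype.card α - 1) * m + 1 ≤ k0 + 1 := by
      intro a₁ hU
      have := raceLB (G := G) hβ hm1 hmγ hstal _ (insert v ∅) ∅ (Finset.univ.erase a₁) ∅ rfl
        (by simp) hU (by simp) k0 h'
      have hcard : (Finset.univ.erase a₁).card = Fintype.card α - 1 := by
        rw [Finset.card_erase_of_mem (Finset.mem_univ a₁), Finset.card_univ]
      rw [hcard] at this
      simp only [Finset.sum_empty, add_zero] at this
      omega
    obtain (a₁ | ⟨a₁, b₁⟩) := v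
    · refine key a₁ (fun a ha => ?_)
      have hne := Finset.ne_of_mem_erase ha
      exact ⟨by simp [hne], by simp, fun b => ⟨by simp, by simp⟩⟩
    · refine key a₁ (fun a ha => ?_)
      have hne := Finset.ne_of_mem_erase ha
      exact ⟨by simp, by simp, fun b => ⟨by simp [Prod.ext_iff, hne], by simp⟩⟩
  have hgMB : gammaMB (coronaProd G H) = (((Fintype.card α - 1) * m + 1 : ℕ) : ℕ∞) :=
    gammaMB_eq_coe hupD hlbD
  have hgMB' : gammaMB' (coronaProd G H) = ((Fintype.card α * m : ℕ) : ℕ∞) :=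
    gammaMB'_eq_coe hupS hlbS
  have hmain1 : gammaMB (coronaProd G H) = 1 + ((Fintype.card α - 1 : ℕ) : ℕ∞) * gammaMB H := by
    rw [hgMB, heq]
    push_cast
    ring
  have hmain2 : gammaMB' (coronaProd G H) = ((Fintype.card α : ℕ) : ℕ∞) * gammaMB H := by
    rw [hgMB', heq]
    push_cast
    ring
  refine ⟨⟨hmain1, hmain2⟩, fun h2 => ?_⟩
  have hm2 : m = 2 := by
    have : ((m : ℕ) : ℕ∞) = ((2 : ℕ) : ℕ∞) := by
      rw [← heq, ← hmdef] at *
      rw [h2]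
      rfl
    exact_mod_cast this
  constructor
  · rw [hgMB, hm2]
    norm_cast
    omega
  · rw [hgMB', hm2]
    norm_cast
    omega
/-- If `o(H) = 𝒩` with `γ_MB(H) = γ(H)` and `G` is a graph with `n(G) ≥ 2`,
then `γ_MB(G ⊙ H) = 1 + (n(G)-1)·γ_MB(H)` and `γ_MB'(G ⊙ H) = n(G)·γ_MB(H)`.
In particular, if `γ_MB(H) = 2`, then `γ_MB(G ⊙ H) = 2·n(G) - 1` and
`γ_MB'(G ⊙ H) = 2·n(G)`. -/
theorem gammaMB_coronaProd_eqN {α β : Type*} [Fintype α] [DecidableEq α]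
    [Fintype β] [DecidableEq β] (G : SimpleGraph α) (H : SimpleGraph β)
    (hH : OutcomeN H) (heq : gammaMB H = (domNumber H : ℕ∞))
    (hn : 2 ≤ Fintype.card α) :
    (gammaMB (coronaProd G H) = 1 + ((Fintype.card α - 1 : ℕ) : ℕ∞) * gammaMB H ∧
     gammaMB' (coronaProd G H) = ((Fintype.card α : ℕ) : ℕ∞) * gammaMB H) ∧
    (gammaMB H = 2 →
      gammaMB (coronaProd G H) = ((2 * Fintype.card α - 1 : ℕ) : ℕ∞) ∧
      gammaMB' (coronaProd G H) = ((2 * Fintype.card α : ℕ) : ℕ∞)) := by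
  exact gammaMB_coronaProd_eqN' G H hH heq hn
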